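/- Let G be a finite directed graph, M a maximum matching of its associated bipartite graph, and v an unmatched vertex of V⁻. Let D_v be the set of vertices of V⁻ reachable from v by M-alternating paths in the auxiliary graph. Then for every u ∈ D_v there exists a maximum matching M' of the same size as M under which u is unmatched. -/

import Mathlib

/-- `M` is a matching of the bipartite graph associated with the digraph `E`
(with `V⁺ = V⁻ = V` and an edge `(a⁺, b⁻)` iff `E a b`). -/
def IsBipMatching {V : Type*} (E : V → V → Prop) (M : Finset (V × V)) : Prop :=
  (∀ p ∈ M, E p.1 p.2) ∧
  (∀ p ∈ M, ∀ q ∈ M, p ≠ q → p.1 ≠ q.1 ∧ p.2 ≠ q.2)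

/-- One step of an `M`-alternating path between vertices of `V⁻` in the
auxiliary graph: go from `b` along a non-matching edge back to some `a ∈ V⁺`
and then along the (reversed) matching edge of `a` to `b'`. -/
def AltStep {V : Type*} (E : V → V → Prop) (M : Finset (V × V)) (b b' : V) : Prop :=
  ∃ a, E a b ∧ (a, b) ∉ M ∧ (a, b') ∈ M

/-- From any point of a chain, the remaining suffix is a chain. -/
lemma chain_suffix_aux {α : Type*} {r : α → α → Prop} :
    ∀ (l : List α) (c : α), List.Chain r c l → ∀ x ∈ c :: l,
      ∃ s, List.Chain r x s ∧ (x :: s) <:+ (c :: l)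
  | [], c, _, x, hx => by
      simp only [List.mem_singleton] at hx
      exact ⟨[], List.Chain.nil, hx ▸ List.suffix_refl _⟩
  | b :: t, c, hchain, x, hx => by
      rcases List.mem_cons.1 hx with rfl | hx'
      · exact ⟨b :: t, hchain, List.suffix_refl _⟩
      · obtain ⟨hcb, hbt⟩ := List.chain_cons.1 hchain
        obtain ⟨s, hs, hsuff⟩ := chain_suffix_aux t b hbt x hx'
        exact ⟨s, hs, hsuff.trans (List.suffix_cons c (b :: t))⟩

/-- Every chain can be replaced by a duplicate-free chain with the same
endpoints. -/
lemma chain_nodup {α : Type*} [DecidableEq α] {r : α → α → Prop} :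
    ∀ (l : List α) (c : α), List.Chain r c l →
      ∃ s, List.Chain r c s ∧ (c :: s).Nodup ∧
        (c :: s).getLast (List.cons_ne_nil _ _)
          = (c :: l).getLast (List.cons_ne_nil _ _)
  | [], c, _ => ⟨[], List.Chain.nil, List.nodup_singleton c, rfl⟩
  | b :: t, c, hchain => by
      obtain ⟨hcb, hbt⟩ := List.chain_cons.1 hchain
      obtain ⟨s, hs, hnodup, hlast⟩ := chain_nodup t b hbt
      by_cases hc : c ∈ b :: s
      · obtain ⟨s', hs', hsuff⟩ := chain_suffix_aux s b hs c hc
        refine ⟨s', hs', hnodup.sublist hsuff.sublist, ?_⟩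
        obtain ⟨w, hw⟩ := hsuff
        have h1 : (c :: s').getLast (List.cons_ne_nil _ _)
            = (b :: s).getLast (List.cons_ne_nil _ _) := by
          rw [← List.getLast_congr (List.append_ne_nil_of_right_ne_nil w (List.cons_ne_nil c s')) (List.cons_ne_nil _ _) hw,
            List.getLast_append_of_ne_nil (List.append_ne_nil_of_right_ne_nil w (List.cons_ne_nil c s')) (List.cons_ne_nil c s')]
        rw [h1, hlast, List.getLast_cons_cons]
      · refine ⟨b :: s, List.chain_cons.2 ⟨hcb, hs⟩, List.nodup_cons.2 ⟨hc, hnodup⟩, ?_⟩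
        rw [List.getLast_cons_cons, hlast, List.getLast_cons_cons]

/-- Swapping a matching edge `(a, u')` for the edge `(a, b)` (with `b`
unmatched) yields a matching of the same size in which `u'` is unmatched. -/
lemma swap_matching {V : Type*} [DecidableEq V] {E : V → V → Prop}
    {N : Finset (V × V)} (hN : IsBipMatching E N) {a b u' : V} (hE : E a b)
    (hb : ¬ ∃ c, (c, b) ∈ N) (hau' : (a, u') ∈ N) (hbu : b ≠ u') :
    IsBipMatching E (insert (a, b) (N.erase (a, u'))) ∧
    (insert (a, b) (N.erase (a, u'))).card = N.card ∧
    ¬ ∃ c, (c, u') ∈ insert (a, b) (N.erase (a, u')) := by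
  have hab_not : (a, b) ∉ N := fun h => hb ⟨a, h⟩
  have hab_not' : (a, b) ∉ N.erase (a, u') := fun h => hab_not (Finset.mem_of_mem_erase h)
  have hmem : ∀ q ∈ N.erase (a, u'), q ∈ N ∧ q ≠ (a, u') := fun q hq =>
    ⟨Finset.mem_of_mem_erase hq, Finset.ne_of_mem_erase hq⟩
  refine ⟨⟨?_, ?_⟩, ?_, ?_⟩
  · intro p hp
    rcases Finset.mem_insert.1 hp with rfl | hp'
    · exact hE
    · exact hN.1 p (hmem p hp').1
  · intro p hp q hq hpq
    rcases Finset.mem_insert.1 hp with rfl | hp' <;>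
      rcases Finset.mem_insert.1 hq with rfl | hq'
    · exact absurd rfl hpq
    · obtain ⟨hqN, hqne⟩ := hmem q hq'
      constructor
      · intro h1
        exact (hN.2 q hqN (a, u') hau' hqne).1 h1.symm
      · intro h2
        exact hb ⟨q.1, by rw [show b = q.2 from h2]; exact hqN⟩
    · obtain ⟨hpN, hpne⟩ := hmem p hp'
      constructor
      · intro h1
        exact (hN.2 p hpN (a, u') hau' hpne).1 h1
      · intro h2
        exact hb ⟨p.1, by rw [show b = p.2 from h2.symm]; exact hpN⟩
    · exact hN.2 p (hmem p hp').1 q (hmem q hq').1 hpq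
  · rw [Finset.card_insert_of_notMem hab_not', Finset.card_erase_of_mem hau']
    have : 0 < N.card := Finset.card_pos.2 ⟨(a, u'), hau'⟩
    omega
  · rintro ⟨c, hc⟩
    rcases Finset.mem_insert.1 hc with h | h
    · exact hbu (congrArg Prod.snd h).symm
    · obtain ⟨hcN, hcne⟩ := hmem _ h
      exact (hN.2 _ hcN (a, u') hau' hcne).2 rfl

/-- Walking along a duplicate-free alternating chain, we can keep swapping
matching edges so that the current vertex is unmatched. -/
lemma build_matching {V : Type*} [DecidableEq V] {E : V → V → Prop}
    {M : Finset (V × V)} (hM : IsBipMatching E M) :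
    ∀ (l : List V) (b : V) (N : Finset (V × V)),
      List.Chain (AltStep E M) b l → (b :: l).Nodup →
      IsBipMatching E N → N.card = M.card → (¬ ∃ c, (c, b) ∈ N) →
      (∀ p ∈ M, p.2 ∈ l → p ∈ N) →
      ∃ M' : Finset (V × V), IsBipMatching E M' ∧ M'.card = M.card ∧
        ¬ ∃ c, (c, (b :: l).getLast (List.cons_ne_nil _ _)) ∈ M'
  | [], b, N, _, _, hN, hcard, hb, _ => ⟨N, hN, hcard, hb⟩
  | u' :: t, b, N, hchain, hnodup, hN, hcard, hb, hinv => by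
      obtain ⟨⟨a, hEab, hab_nM, hau'_M⟩, ht⟩ := List.chain_cons.1 hchain
      have hbu : b ≠ u' := by
        have := (List.nodup_cons.1 hnodup).1
        intro h; exact this (h ▸ List.mem_cons_self)
      have hau'_N : (a, u') ∈ N := hinv _ hau'_M (List.mem_cons_self)
      obtain ⟨hN', hcard', hu'⟩ := swap_matching hN hEab hb hau'_N hbu
      have hnodup' : (u' :: t).Nodup := (List.nodup_cons.1 hnodup).2
      have hu't : u' ∉ t := (List.nodup_cons.1 hnodup').1
      have hinv' : ∀ p ∈ M, p.2 ∈ t → p ∈ insert (a, b) (N.erase (a, u')) := by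
        intro p hp hpt
        have hpN : p ∈ N := hinv p hp (List.mem_cons_of_mem _ hpt)
        have hpne : p ≠ (a, u') := by
          intro h; exact hu't (by rw [h] at hpt; exact hpt)
        exact Finset.mem_insert_of_mem (Finset.mem_erase_of_ne_of_mem hpne hpN)
      have := build_matching hM t u' (insert (a, b) (N.erase (a, u'))) ht hnodup'
        hN' (hcard'.trans hcard) hu' hinv'
      rwa [List.getLast_cons_cons]

/-- Every vertex of `V⁻` reachable by `M`-alternating paths from an unmatched
vertex `v` is unmatched under some maximum matching of the same size:
all nodes of a dilation set are control-equivalent. -/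
theorem alternating_reachable_equivalent {V : Type*} [Fintype V] [DecidableEq V]
    (E : V → V → Prop) (M : Finset (V × V)) (hM : IsBipMatching E M)
    (hmax : ∀ M' : Finset (V × V), IsBipMatching E M' → M'.card ≤ M.card)
    (v : V) (hv : ¬ ∃ a, (a, v) ∈ M)
    (u : V) (hu : Relation.ReflTransGen (AltStep E M) v u) :
    ∃ M' : Finset (V × V), IsBipMatching E M' ∧ M'.card = M.card ∧
      ¬ ∃ a, (a, u) ∈ M' := by
  obtain ⟨l, hl, hlast⟩ := List.exists_isChain_cons_of_relationReflTransGen hu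
  obtain ⟨s, hs, hnodup, hlast'⟩ := chain_nodup l v hl
  have := build_matching hM s v M hs hnodup hM rfl hv (fun p hp _ => hp)
  rw [hlast', hlast] at this
  exact this
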